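/- Let λ > 0 and P = 0, and let (ψ, (a, b)) be a local solution of the homogeneous Euler ODE with parameters (λ, 0). Then b − a = π and, setting c = (a+b)/2 and A = ψ(c), one has ψ(θ) = A (cos(θ − c))^λ for all θ ∈ (a, b). -/

import Mathlib

open Real Set Filter Topology

lemma const_on_Ioo {f : ℝ → ℝ} {a b : ℝ}
    (h : ∀ x ∈ Ioo a b, HasDerivAt f 0 x) :
    ∀ x ∈ Ioo a b, ∀ y ∈ Ioo a b, f x = f y := by
  have key : ∀ x ∈ Ioo a b, ∀ y ∈ Ioo a b, x ≤ y → f y = f x := by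
    intro x hx y hy hxy
    have hsub : Icc x y ⊆ Ioo a b := fun t ht => ⟨lt_of_lt_of_le hx.1 ht.1, lt_of_le_of_lt ht.2 hy.2⟩
    exact constant_of_has_deriv_right_zero
      (fun t ht => ((h t (hsub ht)).continuousAt).continuousWithinAt)
      (fun t ht => ((h t (hsub ⟨ht.1, ht.2.le⟩)).hasDerivWithinAt)) y (right_mem_Icc.2 hxy)
  intro x hx y hy
  rcases le_total x y with hxy | hxy
  · exact (key x hx y hy hxy).symm
  · exact key y hy x hx hxy

/-- For `P = 0` every local solution `(ψ, (a,b))` of the homogeneous Euler ODE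
has life-span `b - a = π` and is given by `ψ(θ) = A cos(θ - c)^λ` where `c` is the midpoint of
`(a,b)` and `A = ψ(c)`. -/
theorem parallel_shear_classification
    (lam : ℝ) (hlam : 0 < lam)
    (a b : ℝ) (hab : a < b) (ψ ψ' ψ'' : ℝ → ℝ)
    (hcont : ContinuousOn ψ (Set.Icc a b))
    (ha : ψ a = 0) (hb : ψ b = 0)
    (hpos : ∀ θ ∈ Set.Ioo a b, 0 < ψ θ)
    (hd1 : ∀ θ ∈ Set.Ioo a b, HasDerivAt ψ (ψ' θ) θ)
    (hd2 : ∀ θ ∈ Set.Ioo a b, HasDerivAt ψ' (ψ'' θ) θ)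
    (hode : ∀ θ ∈ Set.Ioo a b, 2 * (lam - 1) * (0 : ℝ) =
      -(lam - 1) * (ψ' θ) ^ 2 + lam ^ 2 * (ψ θ) ^ 2 + lam * (ψ'' θ) * (ψ θ)) :
    b - a = Real.pi ∧
      ∀ θ ∈ Set.Ioo a b, ψ θ = ψ ((a + b) / 2) * Real.cos (θ - (a + b) / 2) ^ lam := by
  have hm : (a + b) / 2 ∈ Ioo a b := ⟨by linarith, by linarith⟩
  set m : ℝ := (a + b) / 2 with hm_def
  set w : ℝ → ℝ := fun θ => ψ' θ / (lam * ψ θ) with hw_def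
  -- derivative of w
  have hwd : ∀ θ ∈ Ioo a b, HasDerivAt w (-(1 + (w θ) ^ 2)) θ := by
    intro θ hθ
    have hψ := (hpos θ hθ).ne'
    have hne : lam * ψ θ ≠ 0 := mul_ne_zero hlam.ne' hψ
    have key : lam * ψ'' θ * ψ θ = (lam - 1) * (ψ' θ) ^ 2 - lam ^ 2 * (ψ θ) ^ 2 := by
      have := hode θ hθ; nlinarith [this]
    have h := (hd2 θ hθ).div ((hd1 θ hθ).const_mul lam) hne
    refine h.congr_deriv (Eq.symm ?_)
    simp only [hw_def]
    field_simp
    linear_combination -key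
  -- g := arctan ∘ w + id is constant
  have hgd : ∀ θ ∈ Ioo a b, HasDerivAt (fun θ => arctan (w θ) + θ) 0 θ := by
    intro θ hθ
    have h1 : HasDerivAt (fun θ => arctan (w θ))
        (1 / (1 + (w θ) ^ 2) * (-(1 + (w θ) ^ 2))) θ :=
      (Real.hasDerivAt_arctan (w θ)).comp θ (hwd θ hθ)
    have h2 := h1.add (hasDerivAt_id θ)
    have hne0 : (1 : ℝ) + (w θ) ^ 2 ≠ 0 := by positivity
    refine h2.congr_deriv (Eq.symm ?_)
    field_simp
    ring
  set c : ℝ := arctan (w m) + m with hc_def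
  have hconst := const_on_Ioo hgd
  have harc : ∀ θ ∈ Ioo a b, arctan (w θ) = c - θ := by
    intro θ hθ
    have := hconst θ hθ m hm
    simp only [hc_def]
    linarith
  have hlt : ∀ θ ∈ Ioo a b, -(π/2) < c - θ ∧ c - θ < π/2 := by
    intro θ hθ
    rw [← harc θ hθ]
    exact ⟨neg_pi_div_two_lt_arctan _, arctan_lt_pi_div_two _⟩
  have htan : ∀ θ ∈ Ioo a b, ψ' θ = Real.tan (c - θ) * (lam * ψ θ) := by
    intro θ hθ
    have hne : lam * ψ θ ≠ 0 := mul_ne_zero hlam.ne' (hpos θ hθ).ne'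
    have h1 : Real.tan (c - θ) = w θ := by rw [← harc θ hθ]; exact Real.tan_arctan _
    rw [h1]
    simp only [hw_def]
    exact (div_mul_cancel₀ _ hne).symm
  -- cos positivity
  have hcos : ∀ θ ∈ Ioo a b, 0 < Real.cos (θ - c) := by
    intro θ hθ
    apply Real.cos_pos_of_mem_Ioo
    have := hlt θ hθ
    constructor
    · linarith [this.2]
    · linarith [this.1]
  -- L := log ψ - lam * log cos(θ - c) is constant
  have hLd : ∀ θ ∈ Ioo a b,
      HasDerivAt (fun θ => Real.log (ψ θ) - lam * Real.log (Real.cos (θ - c))) 0 θ := by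
    intro θ hθ
    have hψ := hpos θ hθ
    have hcosθ := hcos θ hθ
    have h1 : HasDerivAt (fun θ => Real.log (ψ θ)) (ψ' θ / ψ θ) θ :=
      (hd1 θ hθ).log hψ.ne'
    have h2 : HasDerivAt (fun θ : ℝ => θ - c) 1 θ := by
      simpa using (hasDerivAt_id θ).sub_const c
    have h3 : HasDerivAt (fun θ => Real.cos (θ - c)) (-Real.sin (θ - c)) θ := by
      have := (Real.hasDerivAt_cos (θ - c)).comp θ h2; simp only [mul_one] at this; exact this
    have h4 : HasDerivAt (fun θ => Real.log (Real.cos (θ - c)))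
        (-Real.sin (θ - c) / Real.cos (θ - c)) θ := h3.log hcosθ.ne'
    have h5 := h1.sub (h4.const_mul lam)
    refine h5.congr_deriv (Eq.symm ?_)
    rw [htan θ hθ, Real.tan_eq_sin_div_cos,
      show c - θ = -(θ - c) by ring, Real.sin_neg, Real.cos_neg]
    field_simp
    ring
  have hLconst := const_on_Ioo hLd
  set E : ℝ := Real.exp (Real.log (ψ m) - lam * Real.log (Real.cos (m - c))) with hE_def
  have hEpos : 0 < E := Real.exp_pos _
  have hform : ∀ θ ∈ Ioo a b, ψ θ = E * Real.cos (θ - c) ^ lam := by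
    intro θ hθ
    have h := hLconst θ hθ m hm
    have hψ := hpos θ hθ
    have hcosθ := hcos θ hθ
    rw [← Real.exp_log hψ,
      show Real.log (ψ θ) = (Real.log (ψ m) - lam * Real.log (Real.cos (m - c)))
        + lam * Real.log (Real.cos (θ - c)) by linarith,
      Real.exp_add]
    congr 1
    rw [Real.rpow_def_of_pos hcosθ]
    ring_nf
  -- boundary behaviour
  have hbound : ∀ x ∈ Icc a b, ψ x = 0 → -(π/2) ≤ c - x → c - x ≤ π/2 →
      (𝓝[Ioo a b] x).NeBot → Real.cos (c - x) = 0 := by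
    intro x hx hψx h1 h2 hne
    by_contra hc0
    have hcpos : 0 < Real.cos (c - x) := by
      rcases lt_or_eq_of_le (Real.cos_nonneg_of_mem_Icc ⟨h1, h2⟩) with h | h
      · exact h
      · exact absurd h.symm hc0
    have hψ0 : Tendsto ψ (𝓝[Ioo a b] x) (𝓝 0) := by
      have := (hcont x hx).mono_left (nhdsWithin_mono _ Ioo_subset_Icc_self)
      rwa [hψx] at this
    have hct : ContinuousAt (fun θ => E * Real.cos (θ - c) ^ lam) x :=
      continuousAt_const.mul (((Real.continuous_cos.comp
        (continuous_id.sub continuous_const)).continuousAt).rpow_const (Or.inr hlam.le))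
    have htend : Tendsto ψ (𝓝[Ioo a b] x) (𝓝 (E * Real.cos (x - c) ^ lam)) := by
      apply Tendsto.congr' _ (hct.continuousWithinAt.tendsto)
      filter_upwards [self_mem_nhdsWithin] with θ hθ
      exact (hform θ hθ).symm
    have heq : (0 : ℝ) = E * Real.cos (x - c) ^ lam := tendsto_nhds_unique hψ0 htend
    have : 0 < E * Real.cos (x - c) ^ lam := by
      apply mul_pos hEpos
      apply Real.rpow_pos_of_pos
      rwa [show x - c = -(c - x) by ring, Real.cos_neg]
    linarith
  -- at a
  have hna : (𝓝[Ioo a b] a).NeBot := by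
    rw [← mem_closure_iff_nhdsWithin_neBot, closure_Ioo hab.ne]
    exact ⟨le_refl a, hab.le⟩
  have hnb : (𝓝[Ioo a b] b).NeBot := by
    rw [← mem_closure_iff_nhdsWithin_neBot, closure_Ioo hab.ne]
    exact ⟨hab.le, le_refl b⟩
  have hca_le : c - a ≤ π / 2 := by
    have ht : Tendsto (fun θ => c - θ) (𝓝[Ioo a b] a) (𝓝 (c - a)) :=
      ((continuous_const.sub continuous_id).tendsto a).mono_left nhdsWithin_le_nhds
    exact le_of_tendsto ht (by filter_upwards [self_mem_nhdsWithin] with θ hθ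
      using (hlt θ hθ).2.le)
  have hcb_ge : -(π / 2) ≤ c - b := by
    have ht : Tendsto (fun θ => c - θ) (𝓝[Ioo a b] b) (𝓝 (c - b)) :=
      ((continuous_const.sub continuous_id).tendsto b).mono_left nhdsWithin_le_nhds
    exact ge_of_tendsto ht (by filter_upwards [self_mem_nhdsWithin] with θ hθ
      using (hlt θ hθ).1.le)
  have hca_gt : -(π/2) < c - a := by
    have := (hlt m hm).1
    have : -(π/2) < c - m := this
    have hma : a < m := hm.1
    linarith
  have hcb_lt : c - b < π/2 := by
    have := (hlt m hm).2
    have hmb : m < b := hm.2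
    linarith
  have hcosa : Real.cos (c - a) = 0 :=
    hbound a ⟨le_refl a, hab.le⟩ ha hca_gt.le hca_le hna
  have hcosb : Real.cos (c - b) = 0 :=
    hbound b ⟨hab.le, le_refl b⟩ hb hcb_ge (by linarith) hnb
  have hca : c - a = π / 2 := by
    by_contra h
    have hlt' : c - a < π / 2 := lt_of_le_of_ne hca_le h
    have : 0 < Real.cos (c - a) := Real.cos_pos_of_mem_Ioo ⟨hca_gt, hlt'⟩
    linarith
  have hcb : c - b = -(π / 2) := by
    by_contra h
    have hgt' : -(π/2) < c - b := lt_of_le_of_ne hcb_ge (Ne.symm h)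
    have : 0 < Real.cos (c - b) := Real.cos_pos_of_mem_Ioo ⟨hgt', hcb_lt⟩
    linarith
  have hba : b - a = π := by linarith
  have hmc : m = c := by simp only [hm_def]; linarith
  have hψm : ψ m = E := by
    have := hform m hm
    rw [hmc] at this ⊢
    simpa using this
  refine ⟨hba, fun θ hθ => ?_⟩
  rw [hψm, hmc]
  exact hform θ hθ
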